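/- arXiv:2405.07007 — 4 statements merged into one kernel-verified Lean document; each statement's English description precedes it below -/
import Mathlib

section
/- For an invertible matrix M of size n over F_q, the branch number B(M) = min_{x ≠ 0} (w(x) + w(Mx)) equals the minimum over all nonzero x with 1 ≤ w(x) ≤ ⌊(n+1)/2⌋ of min(w(x) + w(Mx), w(x) + w(M⁻¹x)). -/
/-- The branch number of an invertible matrix equals the minimum over nonzero vectors
of weight at most `⌊(n+1)/2⌋` of `min(w(x)+w(Mx), w(x)+w(M⁻¹x))`. -/
theorem branch_number_half_weight (n : ℕ) (hn : 1 ≤ n) (F : Type*) [Field F] [Fintype F]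
    [DecidableEq F] (M : Matrix (Fin n) (Fin n) F) (hM : IsUnit M) :
    sInf {k : ℕ | ∃ x : Fin n → F, x ≠ 0 ∧
        k = hammingNorm x + hammingNorm (M.mulVec x)} =
    sInf {k : ℕ | ∃ x : Fin n → F, x ≠ 0 ∧ 1 ≤ hammingNorm x ∧
        hammingNorm x ≤ (n + 1) / 2 ∧
        k = min (hammingNorm x + hammingNorm (M.mulVec x))
                (hammingNorm x + hammingNorm (M⁻¹.mulVec x))} := by
  have hdet : IsUnit M.det := (Matrix.isUnit_iff_isUnit_det M).mp hM
  have hinv : M⁻¹ * M = 1 := Matrix.nonsing_inv_mul M hdet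
  have hinv' : M * M⁻¹ = 1 := Matrix.mul_nonsing_inv M hdet
  have hcanc : ∀ x : Fin n → F, M⁻¹.mulVec (M.mulVec x) = x := by
    intro x; rw [Matrix.mulVec_mulVec, hinv, Matrix.one_mulVec]
  have hcanc' : ∀ x : Fin n → F, M.mulVec (M⁻¹.mulVec x) = x := by
    intro x; rw [Matrix.mulVec_mulVec, hinv', Matrix.one_mulVec]
  have hMne : ∀ x : Fin n → F, x ≠ 0 → M.mulVec x ≠ 0 := by
    intro x hx h0
    exact hx (by rw [← hcanc x, h0, Matrix.mulVec_zero])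
  have hpos : ∀ x : Fin n → F, x ≠ 0 → 1 ≤ hammingNorm x := by
    intro x hx; exact Nat.one_le_iff_ne_zero.mpr (hammingNorm_ne_zero_iff.mpr hx)
  -- the standard basis vector
  have i0 : Fin n := ⟨0, hn⟩
  set e : Fin n → F := Pi.single i0 1 with he
  have heN : hammingNorm e = 1 := by
    simp [he, hammingNorm, Finset.filter_eq', Pi.single_apply]
  have hene : e ≠ 0 := by
    intro h; rw [h] at heN; simp [hammingNorm_zero] at heN
  have hhalf : 1 ≤ (n + 1) / 2 := by omega
  apply le_antisymm
  · -- sInf LHS ≤ sInf RHS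
    apply le_csInf
    · exact ⟨min (hammingNorm e + hammingNorm (M.mulVec e))
        (hammingNorm e + hammingNorm (M⁻¹.mulVec e)), e, hene, by rw [heN], by rw [heN]; exact hhalf, rfl⟩
    · rintro k ⟨x, hx, -, -, rfl⟩
      rcases min_cases (hammingNorm x + hammingNorm (M.mulVec x))
        (hammingNorm x + hammingNorm (M⁻¹.mulVec x)) with ⟨h, -⟩ | ⟨h, -⟩ <;> rw [h]
      · exact Nat.sInf_le ⟨x, hx, rfl⟩
      · refine Nat.sInf_le ⟨M⁻¹.mulVec x, ?_, ?_⟩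
        · intro h0; exact hx (by rw [← hcanc' x, h0, Matrix.mulVec_zero])
        · rw [hcanc' x]; ring
  · -- sInf RHS ≤ sInf LHS
    apply le_csInf
    · exact ⟨hammingNorm e + hammingNorm (M.mulVec e), e, hene, rfl⟩
    · rintro k ⟨x, hx, rfl⟩
      by_cases h1 : hammingNorm x ≤ (n + 1) / 2
      · exact le_trans (Nat.sInf_le ⟨x, hx, hpos x hx, h1, rfl⟩) (min_le_left _ _)
      · by_cases h2 : hammingNorm (M.mulVec x) ≤ (n + 1) / 2
        · have hy := hMne x hx
          refine le_trans (Nat.sInf_le ⟨M.mulVec x, hy, hpos _ hy, h2, rfl⟩) ?_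
          refine le_trans (min_le_right _ _) ?_
          rw [hcanc x]; omega
        · have hle : hammingNorm (M.mulVec e) ≤ n := by
            simpa using (hammingNorm_le_card_fintype (x := M.mulVec e))
          refine le_trans (Nat.sInf_le ⟨e, hene, by rw [heN], by rw [heN]; exact hhalf, rfl⟩) ?_
          refine le_trans (min_le_left _ _) ?_
          have hx1 : (n + 1) / 2 < hammingNorm x := by omega
          have hx2 : (n + 1) / 2 < hammingNorm (M.mulVec x) := by omega
          rw [heN]; omega
end

section
/- For an invertible matrix M of size n over F_q, the branch number B(M) equals the minimum over k = 1,...,⌊(n+1)/2⌋ and x ∈ S_k of min(w(x) + w(Mx), w(x) + w(M⁻¹x)), where S_k is the set of weight-k vectors whose first nonzero coordinate is 1. -/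
/-- `x` has first nonzero coordinate equal to `1`. -/
def FirstNonzeroOne {n : ℕ} {F : Type*} [Field F] (x : Fin n → F) : Prop :=
  ∃ t : Fin n, x t = 1 ∧ ∀ s : Fin n, s < t → x s = 0

lemma hammingNorm_smul_ne_zero {n : ℕ} {F : Type*} [Field F] [DecidableEq F]
    {c : F} (hc : c ≠ 0) (x : Fin n → F) : hammingNorm (c • x) = hammingNorm x :=
  hammingNorm_smul (fun _ => (isUnit_iff_ne_zero.mpr hc).isSMulRegular F) x

lemma exists_scale {n : ℕ} {F : Type*} [Field F] [DecidableEq F]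
    {x : Fin n → F} (hx : x ≠ 0) : ∃ c : F, c ≠ 0 ∧ FirstNonzeroOne (c • x) := by
  have hne : (Finset.univ.filter fun i => x i ≠ 0).Nonempty := by
    rcases Function.ne_iff.mp hx with ⟨i, hi⟩
    exact ⟨i, by simpa using hi⟩
  set t := (Finset.univ.filter fun i => x i ≠ 0).min' hne with ht
  have hxt : x t ≠ 0 := by
    have := (Finset.univ.filter fun i => x i ≠ 0).min'_mem hne
    simpa using this
  refine ⟨(x t)⁻¹, inv_ne_zero hxt, t, ?_, ?_⟩
  · simp [inv_mul_cancel₀ hxt]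
  · intro s hs
    by_contra hxs
    have hxs' : x s ≠ 0 := fun h => hxs (by simp [h])
    have : t ≤ s := Finset.min'_le _ s (by simp [hxs'])
    exact absurd hs (not_lt.mpr this)

/-- The branch number equals the minimum over representatives `x ∈ S_k`,
`k = 1, …, ⌊(n+1)/2⌋`, of `min(w(x)+w(Mx), w(x)+w(M⁻¹x))`. -/
theorem branch_number_representatives (n : ℕ) (hn : 1 ≤ n) (F : Type*) [Field F]
    [Fintype F] [DecidableEq F] (M : Matrix (Fin n) (Fin n) F) (hM : IsUnit M) :
    sInf {m : ℕ | ∃ x : Fin n → F, x ≠ 0 ∧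
        m = hammingNorm x + hammingNorm (M.mulVec x)} =
    sInf {m : ℕ | ∃ k : ℕ, 1 ≤ k ∧ k ≤ (n + 1) / 2 ∧ ∃ x : Fin n → F,
        hammingNorm x = k ∧ FirstNonzeroOne x ∧
        m = min (hammingNorm x + hammingNorm (M.mulVec x))
                (hammingNorm x + hammingNorm (M⁻¹.mulVec x))} := by
  have hdet : IsUnit M.det := (Matrix.isUnit_iff_isUnit_det M).mp hM
  have hinvM : ∀ v : Fin n → F, M⁻¹.mulVec (M.mulVec v) = v := by
    intro v
    rw [Matrix.mulVec_mulVec, Matrix.nonsing_inv_mul M hdet, Matrix.one_mulVec]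
  have hMinv : ∀ v : Fin n → F, M.mulVec (M⁻¹.mulVec v) = v := by
    intro v
    rw [Matrix.mulVec_mulVec, Matrix.mul_nonsing_inv M hdet, Matrix.one_mulVec]
  have hMne : ∀ v : Fin n → F, v ≠ 0 → M.mulVec v ≠ 0 := by
    intro v hv h
    exact hv (by rw [← hinvM v, h, Matrix.mulVec_zero])
  set L := {m : ℕ | ∃ x : Fin n → F, x ≠ 0 ∧
      m = hammingNorm x + hammingNorm (M.mulVec x)} with hL
  set R := {m : ℕ | ∃ k : ℕ, 1 ≤ k ∧ k ≤ (n + 1) / 2 ∧ ∃ x : Fin n → F,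
      hammingNorm x = k ∧ FirstNonzeroOne x ∧
      m = min (hammingNorm x + hammingNorm (M.mulVec x))
              (hammingNorm x + hammingNorm (M⁻¹.mulVec x))} with hR
  set e : Fin n → F := Pi.single ⟨0, hn⟩ 1 with he
  have he0 : e ≠ 0 := by
    intro h
    have := congrFun h ⟨0, hn⟩
    simp [he] at this
  have hwe : hammingNorm e = 1 := by
    have hset : ({i | e i ≠ 0} : Finset (Fin n)) = {(⟨0, hn⟩ : Fin n)} := by
      ext i
      by_cases hi : i = ⟨0, hn⟩ <;> simp [he, hi, Pi.single_apply]
    simp only [hammingNorm, hset, Finset.card_singleton]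
  have hLne : L.Nonempty := ⟨_, e, he0, rfl⟩
  apply le_antisymm
  · -- sInf L ≤ sInf R
    have hRne : R.Nonempty := by
      obtain ⟨c, hc, hfno⟩ := exists_scale he0
      have hw : hammingNorm (c • e) = 1 := by rw [hammingNorm_smul_ne_zero hc, hwe]
      exact ⟨_, 1, le_refl 1, by omega, c • e, hw, hfno, rfl⟩
    obtain ⟨k, hk1, hk2, x, hxk, hfno, hm⟩ := Nat.sInf_mem hRne
    have hx0 : x ≠ 0 := by
      rw [← hammingNorm_ne_zero_iff, hxk]; omega
    have h1 : hammingNorm x + hammingNorm (M.mulVec x) ∈ L := ⟨x, hx0, rfl⟩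
    have h2 : hammingNorm x + hammingNorm (M⁻¹.mulVec x) ∈ L := by
      refine ⟨M⁻¹.mulVec x, ?_, ?_⟩
      · intro h
        exact hx0 (by rw [← hMinv x, h, Matrix.mulVec_zero])
      · rw [hMinv x]; ring
    rw [hm]
    rcases min_cases (hammingNorm x + hammingNorm (M.mulVec x))
      (hammingNorm x + hammingNorm (M⁻¹.mulVec x)) with ⟨h, _⟩ | ⟨h, _⟩ <;>
      rw [h] <;> [exact Nat.sInf_le h1; exact Nat.sInf_le h2]
  · -- sInf R ≤ sInf L
    obtain ⟨x, hx0, hB⟩ := Nat.sInf_mem hLne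
    set B := sInf L with hBdef
    have hBle : B ≤ n + 1 := by
      have hmem : hammingNorm e + hammingNorm (M.mulVec e) ∈ L := ⟨e, he0, rfl⟩
      have h2 : hammingNorm (M.mulVec e) ≤ n := by
        have := hammingNorm_le_card_fintype (x := M.mulVec e)
        simpa [Fintype.card_fin] using this
      have := Nat.sInf_le hmem
      omega
    have hMx0 : M.mulVec x ≠ 0 := hMne x hx0
    have hwx : hammingNorm x ≠ 0 := hammingNorm_ne_zero_iff.mpr hx0
    have hwMx : hammingNorm (M.mulVec x) ≠ 0 := hammingNorm_ne_zero_iff.mpr hMx0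
    by_cases hcase : hammingNorm x ≤ hammingNorm (M.mulVec x)
    · obtain ⟨c, hc, hfno⟩ := exists_scale hx0
      have hk2 : hammingNorm (c • x) ≤ (n + 1) / 2 := by
        rw [hammingNorm_smul_ne_zero hc, Nat.le_div_iff_mul_le (by norm_num)]
        omega
      have hmem : min (hammingNorm (c • x) + hammingNorm (M.mulVec (c • x)))
          (hammingNorm (c • x) + hammingNorm (M⁻¹.mulVec (c • x))) ∈ R := by
        refine ⟨hammingNorm (c • x), ?_, hk2, c • x, rfl, hfno, rfl⟩
        rw [hammingNorm_smul_ne_zero hc]; omega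
      refine le_trans (Nat.sInf_le hmem) (le_trans (min_le_left _ _) ?_)
      rw [Matrix.mulVec_smul, hammingNorm_smul_ne_zero hc, hammingNorm_smul_ne_zero hc]
      omega
    · obtain ⟨c, hc, hfno⟩ := exists_scale hMx0
      have hk2 : hammingNorm (c • M.mulVec x) ≤ (n + 1) / 2 := by
        rw [hammingNorm_smul_ne_zero hc, Nat.le_div_iff_mul_le (by norm_num)]
        omega
      have hmem : min (hammingNorm (c • M.mulVec x) + hammingNorm (M.mulVec (c • M.mulVec x)))
          (hammingNorm (c • M.mulVec x) + hammingNorm (M⁻¹.mulVec (c • M.mulVec x))) ∈ R := by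
        refine ⟨hammingNorm (c • M.mulVec x), ?_, hk2, c • M.mulVec x, rfl, hfno, rfl⟩
        rw [hammingNorm_smul_ne_zero hc]; omega
      refine le_trans (Nat.sInf_le hmem) (le_trans (min_le_right _ _) ?_)
      rw [Matrix.mulVec_smul, hammingNorm_smul_ne_zero hc, hammingNorm_smul_ne_zero hc,
        hinvM x]
      omega
end

section
/- For integers n ≥ 1 and q ≥ 4, 2n·∑_{k=1}^{⌊(n+1)/2⌋} C(n,k)·(k-1)·(q-1)^{k-1} < 2^{n + 3/2} · n^{3/2} · (q-1)^{(n-1)/2}. -/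
open Finset

lemma cb_sq (m : ℕ) : (3*m+1) * Nat.centralBinom m ^ 2 ≤ 16 ^ m := by
  induction m with
  | zero => simp [Nat.centralBinom]
  | succ m ih =>
    have key := Nat.succ_mul_centralBinom_succ m
    have e : (m+1)^2 * Nat.centralBinom (m+1)^2
        = 4*(2*m+1)^2 * Nat.centralBinom m^2 := by
      have := congrArg (· ^ 2) key
      simp only [mul_pow] at this
      nlinarith [this]
    refine Nat.le_of_mul_le_mul_left ?_ (show 0 < (m+1)^2 by positivity)
    calc (m+1)^2 * ((3*(m+1)+1) * Nat.centralBinom (m+1)^2)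
        = (3*m+4) * ((m+1)^2 * Nat.centralBinom (m+1)^2) := by ring
      _ = (3*m+4) * (4*(2*m+1)^2 * Nat.centralBinom m^2) := by rw [e]
      _ ≤ 16*(m+1)^2 * ((3*m+1) * Nat.centralBinom m^2) := by
          nlinarith [Nat.zero_le (m * Nat.centralBinom m ^ 2)]
      _ ≤ 16*(m+1)^2 * 16^m := Nat.mul_le_mul_left _ ih
      _ = (m+1)^2 * 16^(m+1) := by ring

lemma mid_sq (n : ℕ) : n * (n.choose (n/2))^2 ≤ 4 ^ n := by
  rcases Nat.even_or_odd n with ⟨m, hm⟩ | ⟨m, hm⟩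
  · subst hm
    have h2 : (m + m) / 2 = m := by omega
    have hcb : (m + m).choose m = Nat.centralBinom m := by
      rw [Nat.centralBinom_eq_two_mul_choose, two_mul]
    rw [h2, hcb]
    calc (m + m) * Nat.centralBinom m ^ 2 ≤ (3*m+1) * Nat.centralBinom m ^ 2 := by
          exact Nat.mul_le_mul_right _ (by omega)
      _ ≤ 16 ^ m := cb_sq m
      _ = 4 ^ (m + m) := by rw [← two_mul, pow_mul]; norm_num
  · subst hm
    have h2 : (2*m + 1) / 2 = m := by omega
    have hch : (2*m+1).choose m ≤ 2 * Nat.centralBinom m := by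
      have hs : (2*m+1).choose m = (2*m+1).choose (m+1) := by
        have := Nat.choose_symm (show m+1 ≤ 2*m+1 by omega)
        have hd : 2*m+1 - (m+1) = m := by omega
        rw [hd] at this; exact this
      rw [hs, Nat.choose_succ_succ]
      have h1 : (2*m).choose m = Nat.centralBinom m := rfl
      have h2' : (2*m).choose (m+1) ≤ Nat.centralBinom m := Nat.choose_le_centralBinom _ _
      have h3 : (2*m).choose (Nat.succ m) ≤ Nat.centralBinom m := Nat.choose_le_centralBinom _ _
      simp only [Nat.succ_eq_add_one] at *
      omega
    rw [h2]
    calc (2*m+1) * ((2*m+1).choose m)^2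
        ≤ (2*m+1) * (2 * Nat.centralBinom m)^2 := by
          exact Nat.mul_le_mul_left _ (Nat.pow_le_pow_left hch 2)
      _ = 4 * ((2*m+1) * Nat.centralBinom m ^ 2) := by ring
      _ ≤ 4 * ((3*m+1) * Nat.centralBinom m ^ 2) := by
          exact Nat.mul_le_mul_left _ (Nat.mul_le_mul_right _ (by omega))
      _ ≤ 4 * 16 ^ m := Nat.mul_le_mul_left _ (cb_sq m)
      _ = 4 ^ (2*m+1) := by rw [pow_succ, pow_mul]; norm_num; ring

lemma my_geom_le (r : ℕ) (hr : 3 ≤ r) : ∀ m, 1 ≤ m →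
    2 * ∑ k ∈ Finset.Icc 1 m, r^(k-1) ≤ 3 * r^(m-1) := by
  intro m
  induction m with
  | zero => omega
  | succ m ih =>
    intro _
    rcases Nat.eq_zero_or_pos m with rfl | hm
    · simp
    rw [Finset.sum_Icc_succ_top (by omega)]
    have h1 := ih hm
    have h2 : 3 * r^(m-1) ≤ r^m := by
      calc 3 * r^(m-1) ≤ r * r^(m-1) := Nat.mul_le_mul_right _ hr
        _ = r^m := by rw [← pow_succ']; congr 1; omega
    have h3 : m + 1 - 1 = m := by omega
    rw [h3, Nat.mul_add]
    omega

lemma sum_bound (n q : ℕ) (hn : 1 ≤ n) (hq : 4 ≤ q) :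
    2 * ∑ k ∈ Finset.Icc 1 ((n+1)/2), n.choose k * (k-1) * (q-1)^(k-1)
      ≤ 3 * ((n+1)/2 - 1) * n.choose (n/2) * (q-1)^((n+1)/2 - 1) := by
  set M := (n+1)/2 with hM
  have hM1 : 1 ≤ M := by omega
  have step1 : ∑ k ∈ Finset.Icc 1 M, n.choose k * (k-1) * (q-1)^(k-1)
      ≤ (M-1) * n.choose (n/2) * ∑ k ∈ Finset.Icc 1 M, (q-1)^(k-1) := by
    rw [Finset.mul_sum]
    apply Finset.sum_le_sum
    intro k hk
    simp only [Finset.mem_Icc] at hk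
    have h1 : n.choose k ≤ n.choose (n/2) := Nat.choose_le_middle k n
    have h2 : k - 1 ≤ M - 1 := by omega
    calc n.choose k * (k-1) * (q-1)^(k-1)
        ≤ n.choose (n/2) * (M-1) * (q-1)^(k-1) :=
          Nat.mul_le_mul_right _ (Nat.mul_le_mul h1 h2)
      _ = (M-1) * n.choose (n/2) * (q-1)^(k-1) := by ring
  have step2 : 2 * ∑ k ∈ Finset.Icc 1 M, (q-1)^(k-1) ≤ 3 * (q-1)^(M-1) :=
    my_geom_le (q-1) (by omega) M hM1
  calc 2 * ∑ k ∈ Finset.Icc 1 M, n.choose k * (k-1) * (q-1)^(k-1)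
      ≤ 2 * ((M-1) * n.choose (n/2) * ∑ k ∈ Finset.Icc 1 M, (q-1)^(k-1)) :=
        Nat.mul_le_mul_left _ step1
    _ = (M-1) * n.choose (n/2) * (2 * ∑ k ∈ Finset.Icc 1 M, (q-1)^(k-1)) := by ring
    _ ≤ (M-1) * n.choose (n/2) * (3 * (q-1)^(M-1)) :=
        Nat.mul_le_mul_left _ step2
    _ = 3 * (M-1) * n.choose (n/2) * (q-1)^(M-1) := by ring

/-- For integers `n ≥ 1`, `q ≥ 4`:
`2n ∑_{k=1}^{⌊(n+1)/2⌋} C(n,k)(k-1)(q-1)^{k-1} < 2^{n+3/2} n^{3/2} (q-1)^{(n-1)/2}`. -/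
theorem complexity_bound (n q : ℕ) (hn : 1 ≤ n) (hq : 4 ≤ q) :
    ((2 * n * ∑ k ∈ Finset.Icc 1 ((n + 1) / 2),
        n.choose k * (k - 1) * (q - 1) ^ (k - 1) : ℕ) : ℝ) <
      (2 : ℝ) ^ ((n : ℝ) + 3 / 2) * (n : ℝ) ^ ((3 : ℝ) / 2) *
        ((q : ℝ) - 1) ^ (((n : ℝ) - 1) / 2) := by
  have hS := sum_bound n q hn hq
  set M := (n+1)/2 with hMdef
  set S := ∑ k ∈ Finset.Icc 1 M, n.choose k * (k - 1) * (q - 1) ^ (k - 1) with hSdef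
  set C := n.choose (n/2) with hCdef
  have hn0 : (0:ℝ) < n := by exact_mod_cast hn
  have hn1 : (1:ℝ) ≤ n := by exact_mod_cast hn
  have hq1 : ((q:ℝ) - 1) = ((q-1:ℕ):ℝ) := by
    have h1 : (1:ℕ) ≤ q := by omega
    push_cast [h1]; ring
  have hr1 : (1:ℝ) ≤ ((q-1:ℕ):ℝ) := by
    have : (1:ℕ) ≤ q - 1 := by omega
    exact_mod_cast this
  have hnat : 2*(M-1) + 1 ≤ n := by omega
  have hB : 2*((M-1:ℕ):ℝ) + 1 ≤ (n:ℝ) := by exact_mod_cast hnat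
  -- the r-power bound
  have hA0 : (0:ℝ) < ((q:ℝ) - 1) ^ (((n : ℝ) - 1) / 2) := by
    apply Real.rpow_pos_of_pos; rw [hq1]; linarith
  have hP : (((q-1:ℕ):ℝ))^(M-1:ℕ) ≤ ((q:ℝ) - 1) ^ (((n : ℝ) - 1) / 2) := by
    rw [hq1, ← Real.rpow_natCast]
    apply Real.rpow_le_rpow_of_exponent_le hr1
    linarith
  -- sqrt bound on central binomial
  have hmid := mid_sq n
  have hC2 : (C:ℝ) * Real.sqrt n ≤ 2^(n:ℕ) := by
    have h1 : (C:ℝ) * Real.sqrt n = Real.sqrt ((C:ℝ)^2 * n) := by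
      rw [Real.sqrt_mul (by positivity), Real.sqrt_sq (by positivity)]
    have h2 : ((C:ℝ)^2 * n) ≤ ((2:ℝ)^(n:ℕ))^2 := by
      have : ((n * C^2 : ℕ):ℝ) ≤ ((4^n : ℕ):ℝ) := by exact_mod_cast hmid
      push_cast at this
      calc (C:ℝ)^2 * n = (n:ℝ) * C^2 := by ring
        _ ≤ (4:ℝ)^n := this
        _ = ((2:ℝ)^(n:ℕ))^2 := by
            rw [show (4:ℝ) = 2^2 by norm_num, ← pow_mul, ← pow_mul, Nat.mul_comm]
    rw [h1]
    calc Real.sqrt ((C:ℝ)^2 * n) ≤ Real.sqrt (((2:ℝ)^(n:ℕ))^2) := Real.sqrt_le_sqrt h2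
      _ = (2:ℝ)^(n:ℕ) := Real.sqrt_sq (by positivity)
  -- rewrite RHS
  have hRHS : (2 : ℝ) ^ ((n : ℝ) + 3 / 2) * (n : ℝ) ^ ((3 : ℝ) / 2) *
        ((q : ℝ) - 1) ^ (((n : ℝ) - 1) / 2)
      = ((2:ℝ)^((3:ℝ)/2) * (n:ℝ)) * ((2:ℝ)^(n:ℕ) * Real.sqrt n) *
        ((q : ℝ) - 1) ^ (((n : ℝ) - 1) / 2) := by
    rw [Real.rpow_add two_pos, Real.rpow_natCast,
      show (3:ℝ)/2 = 1 + 1/2 by norm_num, Real.rpow_add hn0, Real.rpow_one,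
      ← Real.sqrt_eq_rpow]
    ring
  rw [hRHS]
  -- cast LHS and use hS
  have hScast : 2*(S:ℝ) ≤ 3 * ((M-1:ℕ):ℝ) * (C:ℝ) * (((q-1:ℕ):ℝ))^(M-1:ℕ) := by
    exact_mod_cast hS
  have h32 : (2:ℝ) ≤ (2:ℝ)^((3:ℝ)/2) := by
    calc (2:ℝ) = (2:ℝ)^(1:ℝ) := (Real.rpow_one 2).symm
      _ ≤ (2:ℝ)^((3:ℝ)/2) := Real.rpow_le_rpow_of_exponent_le one_le_two (by norm_num)
  have hsq : (0:ℝ) < Real.sqrt n := Real.sqrt_pos.mpr hn0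
  have hnss : (n:ℝ) = Real.sqrt n * Real.sqrt n := (Real.mul_self_sqrt hn0.le).symm
  have key : 3 * ((M-1:ℕ):ℝ) * (C:ℝ) * (n:ℝ) <
      ((2:ℝ)^((3:ℝ)/2) * (n:ℝ)) * ((2:ℝ)^(n:ℕ) * Real.sqrt n) := by
    have hCpos : (0:ℝ) ≤ (C:ℝ) := by positivity
    have hBnn : (0:ℝ) ≤ ((M-1:ℕ):ℝ) := by positivity
    have e1 : 3 * ((M-1:ℕ):ℝ) * (C:ℝ) * (n:ℝ)
        = 3 * ((M-1:ℕ):ℝ) * Real.sqrt n * ((C:ℝ) * Real.sqrt n) := by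
      linear_combination (-3 * ((M-1:ℕ):ℝ) * (C:ℝ)) * (Real.mul_self_sqrt hn0.le)
    rw [e1]
    have e2 : 3 * ((M-1:ℕ):ℝ) * Real.sqrt n * ((C:ℝ) * Real.sqrt n)
        ≤ 3 * ((M-1:ℕ):ℝ) * Real.sqrt n * (2:ℝ)^(n:ℕ) := by
      apply mul_le_mul_of_nonneg_left hC2 (by positivity)
    refine lt_of_le_of_lt e2 ?_
    have hend : 3 * ((M-1:ℕ):ℝ) < (2:ℝ)^((3:ℝ)/2) * (n:ℝ) := by
      nlinarith [mul_le_mul_of_nonneg_right h32 hn0.le]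
    have hpos2 : (0:ℝ) < Real.sqrt n * (2:ℝ)^(n:ℕ) := by positivity
    calc 3 * ((M-1:ℕ):ℝ) * Real.sqrt n * (2:ℝ)^(n:ℕ)
        = (3 * ((M-1:ℕ):ℝ)) * (Real.sqrt n * (2:ℝ)^(n:ℕ)) := by ring
      _ < ((2:ℝ)^((3:ℝ)/2) * (n:ℝ)) * (Real.sqrt n * (2:ℝ)^(n:ℕ)) :=
          mul_lt_mul_of_pos_right hend hpos2
      _ = ((2:ℝ)^((3:ℝ)/2) * (n:ℝ)) * ((2:ℝ)^(n:ℕ) * Real.sqrt n) := by ring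
  calc ((2 * n * S : ℕ):ℝ) = (n:ℝ) * (2 * (S:ℝ)) := by push_cast; ring
    _ ≤ (n:ℝ) * (3 * ((M-1:ℕ):ℝ) * (C:ℝ) * (((q-1:ℕ):ℝ))^(M-1:ℕ)) := by
        apply mul_le_mul_of_nonneg_left hScast hn0.le
    _ ≤ (n:ℝ) * (3 * ((M-1:ℕ):ℝ) * (C:ℝ) * (((q:ℝ) - 1) ^ (((n : ℝ) - 1) / 2))) := by
        apply mul_le_mul_of_nonneg_left ?_ hn0.le
        apply mul_le_mul_of_nonneg_left hP (by positivity)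
    _ = (3 * ((M-1:ℕ):ℝ) * (C:ℝ) * (n:ℝ)) * (((q:ℝ) - 1) ^ (((n : ℝ) - 1) / 2)) := by
        ring
    _ < ((2:ℝ)^((3:ℝ)/2) * (n:ℝ)) * ((2:ℝ)^(n:ℕ) * Real.sqrt n) *
        ((q : ℝ) - 1) ^ (((n : ℝ) - 1) / 2) := mul_lt_mul_of_pos_right key hA0
end

section
/- For a 2^m × 2^m Hadamard-type matrix M over a field of characteristic 2 (recursively of the form [[U,V],[V,U]] with U,V Hadamard-type), M² = c²·I where c is the sum of the entries in the first row of M. -/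
/-- The canonical equivalence `Fin (2^m) ⊕ Fin (2^m) ≃ Fin (2^(m+1))`. -/
def hadamardEquiv (m : ℕ) : Fin (2 ^ m) ⊕ Fin (2 ^ m) ≃ Fin (2 ^ (m + 1)) :=
  finSumFinEquiv.trans (finCongr (by rw [pow_succ]; ring))

/-- Hadamard-type matrices: `1×1` matrices, and block matrices `[[U,V],[V,U]]`
with `U`, `V` Hadamard-type. -/
inductive IsHadamardType (F : Type*) [Field F] :
    (m : ℕ) → Matrix (Fin (2 ^ m)) (Fin (2 ^ m)) F → Prop
  | base (M : Matrix (Fin (2 ^ 0)) (Fin (2 ^ 0)) F) : IsHadamardType F 0 M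
  | step {m : ℕ} (U V : Matrix (Fin (2 ^ m)) (Fin (2 ^ m)) F) :
      IsHadamardType F m U → IsHadamardType F m V →
      IsHadamardType F (m + 1)
        ((Matrix.reindex (hadamardEquiv m) (hadamardEquiv m))
          (Matrix.fromBlocks U V V U))

lemma had_comm (F : Type*) [Field F] {m : ℕ}
    {M N : Matrix (Fin (2 ^ m)) (Fin (2 ^ m)) F}
    (hM : IsHadamardType F m M) (hN : IsHadamardType F m N) : M * N = N * M := by
  induction hM with
  | base M =>
    have h1 : ∀ i j : Fin (2 ^ 0), i = j := fun i j => Fin.ext (by omega)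
    ext i j
    simp only [Matrix.mul_apply]
    apply Finset.sum_congr rfl
    intro k _
    rw [h1 i k, h1 j k, mul_comm]
  | step U V hU hV ihU ihV =>
    cases hN with
    | step U' V' hU' hV' =>
      simp only [Matrix.reindex_apply, Matrix.submatrix_mul_equiv, Matrix.fromBlocks_multiply]
      rw [ihU hU', ihU hV', ihV hU', ihV hV', add_comm (U' * V) (V' * U),
        add_comm (U' * U) (V' * V)]

lemma had_symm (m : ℕ) : (hadamardEquiv m).symm ⟨0, Nat.two_pow_pos (m+1)⟩
    = Sum.inl ⟨0, Nat.two_pow_pos m⟩ := by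
  rw [Equiv.symm_apply_eq]
  rfl

/-- For a Hadamard-type matrix over a field of characteristic 2, `M² = c² • 1`,
where `c` is the sum of the entries in the first row of `M`. -/
theorem hadamard_sq (F : Type*) [Field F] [CharP F 2] (m : ℕ)
    (M : Matrix (Fin (2 ^ m)) (Fin (2 ^ m)) F) (hM : IsHadamardType F m M)
    (c : F) (hc : c = ∑ j, M ⟨0, Nat.two_pow_pos m⟩ j) :
    M * M = c ^ 2 • (1 : Matrix (Fin (2 ^ m)) (Fin (2 ^ m)) F) := by
  subst hc
  induction hM with
  | base M =>
    have h1 : ∀ i j : Fin (2 ^ 0), i = j := fun i j => Fin.ext (by omega)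
    have h0 : ∀ i : Fin (2 ^ 0), i = ⟨0, Nat.two_pow_pos 0⟩ := fun i => h1 i _
    ext i j
    rw [h0 i, h0 j]
    simp [Matrix.mul_apply, Matrix.one_apply, Finset.sum_eq_single (⟨0, Nat.two_pow_pos 0⟩ : Fin (2^0)), sq]
  | @step n U V hU hV ihU ihV =>
    set e := hadamardEquiv _ with he
    obtain ⟨a, ha⟩ : ∃ a, (∑ j, U ⟨0, Nat.two_pow_pos _⟩ j) = a := ⟨_, rfl⟩
    obtain ⟨b, hb⟩ : ∃ b, (∑ j, V ⟨0, Nat.two_pow_pos _⟩ j) = b := ⟨_, rfl⟩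
    -- sum of first row
    have hsum : (∑ j, (Matrix.reindex e e) (Matrix.fromBlocks U V V U) ⟨0, Nat.two_pow_pos (_+1)⟩ j)
        = a + b := by
      rw [← ha, ← hb, ← Equiv.sum_comp e]
      simp only [Matrix.reindex_apply, Matrix.submatrix_apply, Equiv.symm_apply_apply, he, had_symm]
      rw [Fintype.sum_sum_type]
      simp [Matrix.fromBlocks]
    rw [hsum]
    simp only [Matrix.reindex_apply, Matrix.submatrix_mul_equiv, Matrix.fromBlocks_multiply]
    rw [had_comm F hV hU, CharTwo.add_self_eq_zero (U * V), ihU, ihV, ha, hb,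
      CharTwo.add_sq a b]
    have key : (Matrix.fromBlocks (a ^ 2 • 1 + b ^ 2 • 1) 0 0 (b ^ 2 • 1 + a ^ 2 • 1) :
        Matrix (Fin (2 ^ n) ⊕ Fin (2 ^ n)) (Fin (2 ^ n) ⊕ Fin (2 ^ n)) F)
        = (a ^ 2 + b ^ 2) • 1 := by
      rw [add_comm (b ^ 2 • (1 : Matrix (Fin (2 ^ n)) (Fin (2 ^ n)) F)), ← add_smul,
        ← Matrix.fromBlocks_one, Matrix.fromBlocks_smul]
      simp
    rw [key]
    simp [Matrix.submatrix_smul, Matrix.submatrix_one_equiv e.symm]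
end
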